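/- arXiv:2309.16475 — 3 statements merged into one kernel-verified Lean document; each statement's English description precedes it below -/
import Mathlib

section
/- Let h_U = Λ^{⊗4}(I − |Φ_U⟩⟨Φ_U|)Λ^{⊗4} be an 8-qubit operator where Λ = δ|Φ_I⟩⟨Φ_I| + Σ_{p∈{X,XZ,Z}}|Φ_p⟩⟨Φ_p| with 0 < δ < 1 and |Φ_U⟩ is a unit vector. Then h_U² ⪰ δ⁸ h_U; in particular every nonzero eigenvalue of h_U is at least δ⁸, i.e., h_U has spectral gap at least δ⁸ above its kernel. -/
open Matrix Complex Kronecker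
open scoped ComplexOrder

noncomputable section

def σX : Matrix (Fin 2) (Fin 2) ℂ := !![0, 1; 1, 0]
def σZ : Matrix (Fin 2) (Fin 2) ℂ := !![1, 0; 0, -1]

/-- The Pauli family 𝒫 = {I, X, XZ, Z}. -/
def Pauli : Fin 4 → Matrix (Fin 2) (Fin 2) ℂ := ![1, σX, σX * σZ, σZ]

/-- weight: 0 for the identity, 1 for a nontrivial Pauli. -/
def pwt : Fin 4 → ℕ := ![0, 1, 1, 1]

/-- The Bell state |Φ_I⟩ = (|00⟩+|11⟩)/√2 as a vector on two qubits. -/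
def bell : Fin 2 × Fin 2 → ℂ := fun p => if p.1 = p.2 then ((1 / Real.sqrt 2 : ℝ) : ℂ) else 0

/-- |Φ_A⟩ = (I ⊗ A)|Φ_I⟩. -/
def bellOf (A : Matrix (Fin 2) (Fin 2) ℂ) : Fin 2 × Fin 2 → ℂ :=
  fun p => ∑ k, A p.2 k * bell (p.1, k)

/-- Outer product |u⟩⟨v|. -/
def outer {α : Type*} (u v : α → ℂ) : Matrix α α ℂ :=
  Matrix.of fun i j => u i * star (v j)

/-- Λ = δ|Φ_I⟩⟨Φ_I| + Σ_{p∈{X,XZ,Z}} |Φ_p⟩⟨Φ_p|. -/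
def Lam (δ : ℝ) : Matrix (Fin 2 × Fin 2) (Fin 2 × Fin 2) ℂ :=
  (δ : ℂ) • outer (bellOf 1) (bellOf 1) +
    ∑ i ∈ ({1, 2, 3} : Finset (Fin 4)), outer (bellOf (Pauli i)) (bellOf (Pauli i))

/-- Index type of eight qubits, grouped into four pairs. -/
abbrev V8 := ((Fin 2 × Fin 2) × (Fin 2 × Fin 2)) × ((Fin 2 × Fin 2) × (Fin 2 × Fin 2))

/-- Λ^{⊗4} acting on four disjoint qubit pairs. -/
def Lam4 (δ : ℝ) : Matrix V8 V8 ℂ := (Lam δ ⊗ₖ Lam δ) ⊗ₖ (Lam δ ⊗ₖ Lam δ)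

/-- h_U = Λ^{⊗4}(I − |Φ_U⟩⟨Φ_U|)Λ^{⊗4} for a unit vector |Φ_U⟩ on eight qubits. -/
def hU8 (δ : ℝ) (ΦU : V8 → ℂ) : Matrix V8 V8 ℂ :=
  Lam4 δ * (1 - outer ΦU ΦU) * Lam4 δ

/-! ### Auxiliary lemmas -/

lemma outer_conjT {α : Type*} (u v : α → ℂ) : (outer u v)ᴴ = outer v u := by
  ext i j; simp [outer, conjTranspose_apply, mul_comm]

lemma outer_mul_outer {α : Type*} [Fintype α] (u v w x : α → ℂ) :
    outer u v * outer w x = (star v ⬝ᵥ w) • outer u x := by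
  ext i j
  simp [outer, mul_apply, dotProduct, Finset.mul_sum, Finset.sum_mul]
  congr 1; ext k; ring

lemma outer_psd {α : Type*} [Fintype α] (u : α → ℂ) : (outer u u).PosSemidef := by
  refine Matrix.PosSemidef.of_dotProduct_mulVec_nonneg ?_ ?_
  · exact outer_conjT u u
  · intro x
    have : star x ⬝ᵥ (outer u u).mulVec x = star (star u ⬝ᵥ x) * (star u ⬝ᵥ x) := by
      simp [outer, mulVec, dotProduct, Finset.mul_sum, Finset.sum_mul, star_sum]
      rw [Finset.sum_comm]
      congr 1; ext i; congr 1; ext k; ring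
    rw [this]
    exact star_mul_self_nonneg _

lemma conjT_kron {α β : Type*} (A : Matrix α α ℂ) (B : Matrix β β ℂ) :
    (A ⊗ₖ B)ᴴ = Aᴴ ⊗ₖ Bᴴ := by
  ext i j; simp [conjTranspose_apply, kroneckerMap_apply]

lemma psd_kron {α β : Type*} [Fintype α] [Fintype β] [DecidableEq α] [DecidableEq β]
    {A : Matrix α α ℂ} {B : Matrix β β ℂ} (hA : A.PosSemidef) (hB : B.PosSemidef) :
    (A ⊗ₖ B).PosSemidef := by
  exact hA.kronecker hB

lemma psd_real_smul {α : Type*} [Fintype α] {A : Matrix α α ℂ} (hA : A.PosSemidef)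
    {r : ℝ} (hr : 0 ≤ r) : ((r : ℂ) • A).PosSemidef := by
  refine Matrix.PosSemidef.of_dotProduct_mulVec_nonneg ?_ ?_
  · show _ᴴ = _
    rw [conjTranspose_smul, hA.1, Complex.star_def, Complex.conj_ofReal]
  · intro x
    have h := hA.dotProduct_mulVec_nonneg x
    rw [Matrix.smul_mulVec, dotProduct_smul, smul_eq_mul]
    exact mul_nonneg (by exact_mod_cast hr) h

lemma psd_one {α : Type*} [Fintype α] [DecidableEq α] :
    (1 : Matrix α α ℂ).PosSemidef := by
  have := posSemidef_conjTranspose_mul_self (1 : Matrix α α ℂ)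
  simpa using this

lemma kron_step {α β : Type*} [Fintype α] [Fintype β] [DecidableEq α] [DecidableEq β]
    {A : Matrix α α ℂ} {B : Matrix β β ℂ} {a b : ℝ}
    (hA : A.PosSemidef) (hB : B.PosSemidef) (ha : 0 ≤ a) (hb : 0 ≤ b)
    (h1 : (A - (a : ℂ) • 1).PosSemidef) (h2 : (B - (b : ℂ) • 1).PosSemidef) :
    (A ⊗ₖ B - ((a * b : ℝ) : ℂ) • 1).PosSemidef := by
  have key : A ⊗ₖ B - ((a * b : ℝ) : ℂ) • 1 =
      (A - (a : ℂ) • 1) ⊗ₖ B + (a : ℂ) • ((1 : Matrix α α ℂ) ⊗ₖ (B - (b : ℂ) • 1)) := by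
    rw [sub_eq_add_neg A, sub_eq_add_neg B, ← neg_smul, ← neg_smul,
      Matrix.add_kronecker, Matrix.kronecker_add, Matrix.smul_kronecker,
      Matrix.kronecker_smul, Matrix.one_kronecker_one]
    push_cast
    module
  rw [key]
  exact (psd_kron h1 hB).add (psd_real_smul (psd_kron psd_one h2) ha)

/-- The four Pauli matrices, concretely. -/
lemma Pauli_eq : Pauli = ![!![1,0;0,1], !![0,1;1,0], !![0,-1;1,0], !![1,0;0,-1]] := by
  funext i
  fin_cases i
  · exact Matrix.one_fin_two
  · rfl
  · show σX * σZ = _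
    rw [σX, σZ, Matrix.mul_fin_two]; norm_num
  · rfl

lemma sqrt2_fact : ((1/Real.sqrt 2:ℝ):ℂ) * ((1/Real.sqrt 2:ℝ):ℂ) = 1/2 := by
  rw [← Complex.ofReal_mul, div_mul_div_comm, Real.mul_self_sqrt (by norm_num)]
  norm_num

lemma sqrt2_sq : (((1/Real.sqrt 2:ℝ):ℂ))^2 = 1/2 := by rw [sq, sqrt2_fact]

lemma sqrt2_pow : ((Real.sqrt 2:ℝ):ℂ)^2 = 2 := by
  norm_cast; rw [Real.sq_sqrt]; norm_num

lemma star_sqrt2 : star ((1/Real.sqrt 2:ℝ):ℂ) = ((1/Real.sqrt 2:ℝ):ℂ) := by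
  rw [Complex.star_def, Complex.conj_ofReal]

lemma bellOf_apply (A : Matrix (Fin 2) (Fin 2) ℂ) (p : Fin 2 × Fin 2) :
    bellOf A p = A p.2 p.1 * ((1/Real.sqrt 2 : ℝ):ℂ) := by
  rcases p with ⟨i, j⟩
  fin_cases i <;> simp [bellOf, bell, Fin.sum_univ_two]

lemma ortho (i j : Fin 4) :
    star (bellOf (Pauli i)) ⬝ᵥ bellOf (Pauli j) = if i = j then 1 else 0 := by
  fin_cases i <;> fin_cases j <;>
    simp only [dotProduct, Fintype.sum_prod_type, Fin.sum_univ_two, Pi.star_apply,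
      bellOf_apply, Pauli_eq, star_mul', star_sqrt2, Matrix.cons_val', Matrix.cons_val_zero,
      Matrix.cons_val_one, Matrix.head_cons, Matrix.empty_val', Matrix.cons_val_fin_one,
      Matrix.head_fin_const, star_one, star_zero, star_neg, Fin.isValue] <;>
    · ring_nf
      simp [sqrt2_sq, sqrt2_fact, sqrt2_pow]
      try norm_num

set_option maxHeartbeats 1000000 in
lemma bellsum : ∑ i : Fin 4, outer (bellOf (Pauli i)) (bellOf (Pauli i)) = 1 := by
  ext p q
  obtain ⟨a, b⟩ := p; obtain ⟨c, d⟩ := q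
  fin_cases a <;> fin_cases b <;> fin_cases c <;> fin_cases d <;>
    · simp only [Finset.sum_apply, Fin.sum_univ_four, outer, Matrix.of_apply,
        bellOf_apply, Pauli_eq, star_mul', star_sqrt2, Matrix.one_apply, Matrix.cons_val',
        Matrix.cons_val_zero, Matrix.cons_val_one, Matrix.head_cons, Matrix.empty_val',
        Matrix.cons_val_fin_one, Matrix.head_fin_const, star_one, star_zero, star_neg,
        Fin.isValue, Matrix.sum_apply]
      ring_nf
      simp [sqrt2_sq, sqrt2_fact, sqrt2_pow, Prod.ext_iff]
      try norm_num

/-- Abbreviation for the Bell projectors. -/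
def Qp (i : Fin 4) : Matrix (Fin 2 × Fin 2) (Fin 2 × Fin 2) ℂ :=
  outer (bellOf (Pauli i)) (bellOf (Pauli i))

lemma QQ (i j : Fin 4) : Qp i * Qp j = if i = j then Qp i else 0 := by
  rw [Qp, Qp, outer_mul_outer, ortho]
  split
  · subst ‹i = j›; rw [one_smul]
  · rw [zero_smul]

lemma Lam_expand (δ : ℝ) : Lam δ = (δ : ℂ) • Qp 0 + (Qp 1 + (Qp 2 + Qp 3)) := by
  rw [Lam, show ({1, 2, 3} : Finset (Fin 4)) = insert 1 (insert 2 {3}) from rfl,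
    Finset.sum_insert (by decide), Finset.sum_insert (by decide), Finset.sum_singleton]
  rfl

lemma Lam_herm (δ : ℝ) : (Lam δ)ᴴ = Lam δ := by
  rw [Lam_expand]
  simp only [conjTranspose_add, conjTranspose_smul, Qp, outer_conjT,
    Complex.star_def, Complex.conj_ofReal]

lemma Lam_sq (δ : ℝ) :
    Lam δ * Lam δ = ((δ^2 : ℝ) : ℂ) • Qp 0 + (Qp 1 + (Qp 2 + Qp 3)) := by
  rw [Lam_expand]
  simp [mul_add, add_mul, smul_mul_assoc, mul_smul_comm, QQ, smul_smul]
  push_cast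
  ext i j
  simp only [Matrix.smul_apply, Complex.real_smul, smul_eq_mul]
  push_cast
  ring

lemma Lam_sq_sub_psd {δ : ℝ} (hδ0 : 0 ≤ δ) (hδ1 : δ ≤ 1) :
    (Lam δ * Lam δ - ((δ^2 : ℝ) : ℂ) • 1).PosSemidef := by
  have hsum : Qp 0 + (Qp 1 + (Qp 2 + Qp 3)) = 1 := by
    rw [← bellsum, Fin.sum_univ_four]; simp only [Qp]; abel
  have key : Lam δ * Lam δ - ((δ^2 : ℝ) : ℂ) • 1 =
      ((1 - δ^2 : ℝ) : ℂ) • (Qp 1 + (Qp 2 + Qp 3)) := by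
    rw [Lam_sq, ← hsum]
    push_cast
    module
  rw [key]
  have hpsd : (Qp 1 + (Qp 2 + Qp 3)).PosSemidef :=
    (outer_psd _).add ((outer_psd _).add (outer_psd _))
  exact psd_real_smul hpsd (by nlinarith)

lemma Lam_sq_psd (δ : ℝ) : (Lam δ * Lam δ).PosSemidef := by
  have := posSemidef_conjTranspose_mul_self (Lam δ)
  rwa [Lam_herm] at this

lemma Lam4_herm (δ : ℝ) : (Lam4 δ)ᴴ = Lam4 δ := by
  simp only [Lam4, conjT_kron, Lam_herm]

lemma Lam4_sq_gap {δ : ℝ} (hδ0 : 0 ≤ δ) (hδ1 : δ ≤ 1) :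
    (Lam4 δ * Lam4 δ - ((δ^8 : ℝ) : ℂ) • 1).PosSemidef := by
  have h2 : (Lam δ ⊗ₖ Lam δ) * (Lam δ ⊗ₖ Lam δ) = (Lam δ * Lam δ) ⊗ₖ (Lam δ * Lam δ) :=
    (mul_kronecker_mul _ _ _ _).symm
  have hp2 : ((Lam δ * Lam δ) ⊗ₖ (Lam δ * Lam δ)).PosSemidef :=
    psd_kron (Lam_sq_psd δ) (Lam_sq_psd δ)
  have hg2 : ((Lam δ * Lam δ) ⊗ₖ (Lam δ * Lam δ) - ((δ^2 * δ^2 : ℝ) : ℂ) • 1).PosSemidef :=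
    kron_step (Lam_sq_psd δ) (Lam_sq_psd δ) (by positivity) (by positivity)
      (Lam_sq_sub_psd hδ0 hδ1) (Lam_sq_sub_psd hδ0 hδ1)
  have h4 : Lam4 δ * Lam4 δ = ((Lam δ * Lam δ) ⊗ₖ (Lam δ * Lam δ)) ⊗ₖ
      ((Lam δ * Lam δ) ⊗ₖ (Lam δ * Lam δ)) := by
    rw [Lam4, ← mul_kronecker_mul, h2]
  rw [h4, show (δ:ℝ)^8 = (δ^2*δ^2)*(δ^2*δ^2) from by ring]
  exact kron_step hp2 hp2 (by positivity) (by positivity) hg2 hg2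

/-- h_U² ⪰ δ⁸ h_U, hence every nonzero eigenvalue of h_U is at least δ⁸. -/
theorem spectral_gap_of_hU (δ : ℝ) (hδ0 : 0 < δ) (hδ1 : δ < 1)
    (ΦU : V8 → ℂ) (hΦ : star ΦU ⬝ᵥ ΦU = 1) :
    (hU8 δ ΦU * hU8 δ ΦU - ((δ ^ 8 : ℝ) : ℂ) • hU8 δ ΦU).PosSemidef ∧
      ∀ (c : ℝ) (v : V8 → ℂ), v ≠ 0 → (hU8 δ ΦU).mulVec v = (c : ℂ) • v → c ≠ 0 →
        δ ^ 8 ≤ c := by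
  set L := Lam4 δ with hL
  set P : Matrix V8 V8 ℂ := 1 - outer ΦU ΦU with hP
  have hQQ : outer ΦU ΦU * outer ΦU ΦU = outer ΦU ΦU := by
    rw [outer_mul_outer, hΦ, one_smul]
  have hPP : P * P = P := by
    rw [hP]
    simp only [sub_mul, mul_sub, one_mul, mul_one, hQQ]
    abel
  have hPherm : Pᴴ = P := by
    rw [hP, conjTranspose_sub, conjTranspose_one, outer_conjT]
  have hLherm : Lᴴ = L := Lam4_herm δ
  have hPLconj : (P * L)ᴴ = L * P := by rw [conjTranspose_mul, hPherm, hLherm]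
  have hU_eq : hU8 δ ΦU = L * P * L := rfl
  have hUpsd : (hU8 δ ΦU).PosSemidef := by
    have : hU8 δ ΦU = (P * L)ᴴ * (P * L) := by
      rw [hPLconj, hU_eq]
      rw [show L * P * (P * L) = L * (P * P) * L by noncomm_ring, hPP]
    rw [this]
    exact posSemidef_conjTranspose_mul_self _
  have key : hU8 δ ΦU * hU8 δ ΦU - ((δ ^ 8 : ℝ) : ℂ) • hU8 δ ΦU =
      (P * L)ᴴ * (L * L - ((δ^8 : ℝ) : ℂ) • 1) * (P * L) := by
    rw [hPLconj, hU_eq]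
    simp only [Matrix.mul_sub, Matrix.sub_mul, Matrix.mul_smul, Matrix.smul_mul, mul_one]
    congr 1
    · noncomm_ring
    · congr 1
      rw [show L * P * (P * L) = L * (P * P) * L by noncomm_ring, hPP]
  have part1 : (hU8 δ ΦU * hU8 δ ΦU - ((δ ^ 8 : ℝ) : ℂ) • hU8 δ ΦU).PosSemidef := by
    rw [key]
    exact (Lam4_sq_gap hδ0.le hδ1.le).conjTranspose_mul_mul_same (P * L)
  refine ⟨part1, ?_⟩
  intro c v hv hev hc
  have hq : 0 < star v ⬝ᵥ v := dotProduct_star_self_pos_iff.mpr hv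
  -- quadratic form of hU8 on v
  have e1 : star v ⬝ᵥ (hU8 δ ΦU).mulVec v = (c : ℂ) * (star v ⬝ᵥ v) := by
    rw [hev, dotProduct_smul, smul_eq_mul]
  have e2 : star v ⬝ᵥ (hU8 δ ΦU * hU8 δ ΦU - ((δ ^ 8 : ℝ) : ℂ) • hU8 δ ΦU).mulVec v =
      ((c^2 - δ^8 * c : ℝ) : ℂ) * (star v ⬝ᵥ v) := by
    rw [Matrix.sub_mulVec, ← Matrix.mulVec_mulVec, hev, Matrix.mulVec_smul, hev,
      Matrix.smul_mulVec, hev]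
    simp only [dotProduct_sub, dotProduct_smul, smul_eq_mul, smul_smul]
    push_cast
    ring
  -- positivity of c
  have hq_re : 0 < (star v ⬝ᵥ v).re := by
    rw [Complex.lt_def] at hq; exact hq.1
  have hc_pos : 0 < c := by
    have h0 := hUpsd.dotProduct_mulVec_nonneg v
    rw [e1] at h0
    rw [Complex.le_def] at h0
    have : 0 ≤ c * (star v ⬝ᵥ v).re := by
      have him : (star v ⬝ᵥ v).im = 0 := by
        rw [Complex.lt_def] at hq; exact hq.2.symm
      simpa [Complex.mul_re, him] using h0.1
    rcases hc.lt_or_gt with h | h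
    · nlinarith
    · exact h
  -- main inequality
  have h0 := part1.dotProduct_mulVec_nonneg v
  rw [e2] at h0
  rw [Complex.le_def] at h0
  have him : (star v ⬝ᵥ v).im = 0 := by
    rw [Complex.lt_def] at hq; exact hq.2.symm
  have hineq : 0 ≤ (c^2 - δ^8 * c) * (star v ⬝ᵥ v).re := by
    simpa [Complex.mul_re, him, ← Complex.ofReal_pow] using h0.1
  nlinarith [mul_pos hc_pos hq_re, hineq, hq_re, hc_pos]

end
end

section
/- Let {Q₁, …, Q_m} be orthogonal projectors on a finite-dimensional Hilbert space and H = Σᵢ Qᵢ. For any unit vector |ψ⟩, define |φ⟩ = (I−Q_m)⋯(I−Q₁)|ψ⟩. Then ‖φ‖² ≥ 1 − 4⟨ψ|H|ψ⟩. -/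
open Matrix Complex

noncomputable section

/-- The ordered product (I−Q_{m-1})⋯(I−Q₀) of the complements of the projectors. -/
def dlOp {d m : ℕ} (Q : Fin m → Matrix (Fin d) (Fin d) ℂ) : Matrix (Fin d) (Fin d) ℂ :=
  ((List.ofFn fun i : Fin m => (1 : Matrix (Fin d) (Fin d) ℂ) - Q i).reverse).prod

namespace QUB

/-- Prefix products defined by recursion on ℕ. -/
def pf {d m : ℕ} (Q : Fin m → Matrix (Fin d) (Fin d) ℂ) : ℕ → Matrix (Fin d) (Fin d) ℂ
  | 0 => 1
  | k + 1 => (if h : k < m then 1 - Q ⟨k, h⟩ else 1) * pf Q k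

lemma pf_castSucc {d m : ℕ} (Q : Fin (m + 1) → Matrix (Fin d) (Fin d) ℂ) :
    ∀ k, k ≤ m → pf (fun i => Q i.castSucc) k = pf Q k := by
  intro k hk
  induction k with
  | zero => rfl
  | succ k ih =>
    have hkm : k < m := hk
    simp only [pf, dif_pos hkm, dif_pos (Nat.lt_succ_of_lt hkm), ih hkm.le, Fin.castSucc_mk]

lemma dlOp_eq_pf {d : ℕ} : ∀ {m : ℕ} (Q : Fin m → Matrix (Fin d) (Fin d) ℂ),
    dlOp Q = pf Q m := by
  intro m
  induction m with
  | zero => intro Q; rfl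
  | succ m ih =>
    intro Q
    have h1 : dlOp Q = (1 - Q (Fin.last m)) * dlOp (fun i => Q i.castSucc) := by
      rw [dlOp, List.ofFn_succ', List.concat_eq_append, List.reverse_append,
        List.reverse_singleton, List.singleton_append, List.prod_cons]
      rfl
    rw [h1, ih, pf_castSucc Q m le_rfl]
    simp only [pf, dif_pos (Nat.lt_succ_self m)]
    rfl

variable {d : ℕ}

private def toE (v : Fin d → ℂ) : EuclideanSpace ℂ (Fin d) :=
  (WithLp.equiv 2 (Fin d → ℂ)).symm v

lemma inner_toE (u v : Fin d → ℂ) : (inner ℂ (toE u) (toE v) : ℂ) = star u ⬝ᵥ v := by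
  rw [dotProduct_comm]; rfl

lemma normSq_toE (v : Fin d → ℂ) : ‖toE v‖ ^ 2 = (star v ⬝ᵥ v).re := by
  have h := inner_self_eq_norm_sq (𝕜 := ℂ) (toE v)
  rw [inner_toE] at h
  simpa using h.symm

lemma dot_self_nonneg (v : Fin d → ℂ) : 0 ≤ (star v ⬝ᵥ v).re := by
  rw [← normSq_toE]; positivity

lemma norm_toE (v : Fin d → ℂ) : ‖toE v‖ = Real.sqrt ((star v ⬝ᵥ v).re) := by
  rw [← normSq_toE, Real.sqrt_sq (norm_nonneg _)]

lemma cs_re (u v : Fin d → ℂ) :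
    (star u ⬝ᵥ v).re ≤ Real.sqrt ((star u ⬝ᵥ u).re) * Real.sqrt ((star v ⬝ᵥ v).re) := by
  rw [← inner_toE, ← norm_toE, ← norm_toE]
  calc (inner ℂ (toE u) (toE v) : ℂ).re ≤ ‖(inner ℂ (toE u) (toE v) : ℂ)‖ := Complex.re_le_norm _
    _ ≤ ‖toE u‖ * ‖toE v‖ := norm_inner_le_norm _ _

lemma cs_normSq (u v : Fin d → ℂ) :
    Complex.normSq (star u ⬝ᵥ v) ≤ (star u ⬝ᵥ u).re * (star v ⬝ᵥ v).re := by
  rw [← inner_toE, ← normSq_toE, ← normSq_toE, ← Complex.sq_norm]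
  have h := norm_inner_le_norm (𝕜 := ℂ) (toE u) (toE v)
  calc ‖(inner ℂ (toE u) (toE v) : ℂ)‖ ^ 2
      ≤ (‖toE u‖ * ‖toE v‖) ^ 2 := by
        apply pow_le_pow_left₀ (by positivity) _ 2
        simpa using h
    _ = ‖toE u‖ ^ 2 * ‖toE v‖ ^ 2 := by ring

lemma dot_sum {ι : Type*} (v : Fin d → ℂ) (s : Finset ι) (w : ι → Fin d → ℂ) :
    v ⬝ᵥ (∑ j ∈ s, w j) = ∑ j ∈ s, v ⬝ᵥ w j := by
  simp only [dotProduct, Finset.sum_apply, Finset.mul_sum]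
  exact Finset.sum_comm

lemma sum_mulVec' {ι : Type*} (s : Finset ι) (A : ι → Matrix (Fin d) (Fin d) ℂ)
    (v : Fin d → ℂ) : (∑ i ∈ s, A i) *ᵥ v = ∑ i ∈ s, A i *ᵥ v := by
  ext j
  simp only [mulVec, dotProduct, Finset.sum_apply, Matrix.sum_apply, Finset.sum_mul]
  rw [Finset.sum_comm]

end QUB

open QUB

/-- Quantum union bound: for projectors Q₁,…,Q_m, H = ΣQᵢ, a unit vector ψ, and
φ = (I−Q_m)⋯(I−Q₁)ψ, we have ‖φ‖² ≥ 1 − 4⟨ψ|H|ψ⟩. -/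
theorem quantum_union_bound {d m : ℕ}
    (Q : Fin m → Matrix (Fin d) (Fin d) ℂ)
    (hQp : ∀ i, Q i * Q i = Q i) (hQh : ∀ i, (Q i).IsHermitian)
    (ψ : Fin d → ℂ) (hψ : star ψ ⬝ᵥ ψ = 1) :
    1 - 4 * ((star ψ ⬝ᵥ (∑ i, Q i).mulVec ψ).re) ≤
      ((star ((dlOp Q).mulVec ψ)) ⬝ᵥ ((dlOp Q).mulVec ψ)).re := by
  -- basic facts about hermitian projectors
  have hherm : ∀ (i : Fin m) (v w : Fin d → ℂ),
      star ((Q i) *ᵥ v) ⬝ᵥ w = star v ⬝ᵥ ((Q i) *ᵥ w) := by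
    intro i v w
    rw [star_mulVec, dotProduct_mulVec, (hQh i).eq]
  have hproj : ∀ (i : Fin m) (v w : Fin d → ℂ),
      star ((Q i) *ᵥ v) ⬝ᵥ ((Q i) *ᵥ w) = star v ⬝ᵥ ((Q i) *ᵥ w) := by
    intro i v w
    rw [hherm, Matrix.mulVec_mulVec, hQp i]
  -- the sequence of partial vectors
  set x : ℕ → (Fin d → ℂ) := fun k => (pf Q k) *ᵥ ψ with hxdef
  set q : ℕ → (Fin d → ℂ) := fun j => if h : j < m then (Q ⟨j, h⟩) *ᵥ (x j) else 0 with hqdef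
  set p : ℕ → (Fin d → ℂ) := fun j => if h : j < m then (Q ⟨j, h⟩) *ᵥ ψ else 0 with hpdef
  have hx0 : x 0 = ψ := Matrix.one_mulVec ψ
  have hstep : ∀ k, k < m → x (k + 1) = x k - q k := by
    intro k hk
    show (pf Q (k + 1)) *ᵥ ψ = _
    rw [pf, dif_pos hk, ← Matrix.mulVec_mulVec, Matrix.sub_mulVec, Matrix.one_mulVec,
      hqdef]
    simp only [dif_pos hk]
    rfl
  -- C1: Pythagoras telescoping
  have C1 : ∀ k, k ≤ m →
      star ψ ⬝ᵥ ψ = star (x k) ⬝ᵥ (x k) + ∑ j ∈ Finset.range k, star (q j) ⬝ᵥ (q j) := by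
    intro k hk
    induction k with
    | zero => simp [hx0]
    | succ k ih =>
      have hkm : k < m := hk
      rw [Finset.sum_range_succ, ih hkm.le]
      have e1 : star (q k) ⬝ᵥ (q k) = star (x k) ⬝ᵥ (q k) := by
        simp only [hqdef, dif_pos hkm]; exact hproj _ _ _
      have e2 : star (q k) ⬝ᵥ (x k) = star (x k) ⬝ᵥ (q k) := by
        conv_lhs => rw [hqdef]
        simp only [dif_pos hkm]
        rw [hherm]
        simp only [hqdef, dif_pos hkm]
      rw [hstep k hkm, star_sub, sub_dotProduct, dotProduct_sub,
        dotProduct_sub, e1, e2]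
      ring
  -- C2: telescoping of the vector itself
  have C2 : ∀ k, k ≤ m → ψ - x k = ∑ j ∈ Finset.range k, q j := by
    intro k hk
    induction k with
    | zero => simp [hx0]
    | succ k ih =>
      have hkm : k < m := hk
      rw [Finset.sum_range_succ, ← ih hkm.le, hstep k hkm]
      abel
  -- real quantities
  set S : ℝ := ∑ j ∈ Finset.range m, (star (q j) ⬝ᵥ (q j)).re with hSdef
  set ε : ℝ := (star ψ ⬝ᵥ (∑ i, Q i).mulVec ψ).re with hεdef
  have hS1 : 1 = (star (x m) ⬝ᵥ (x m)).re + S := by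
    have h := congrArg Complex.re (C1 m le_rfl)
    rw [hψ] at h
    simpa [Complex.re_sum] using h
  have hS0 : 0 ≤ S := Finset.sum_nonneg fun j _ => dot_self_nonneg _
  -- ε as a sum
  have hε : ε = ∑ j ∈ Finset.range m, (star (p j) ⬝ᵥ (p j)).re := by
    rw [hεdef]
    rw [show ((∑ i, Q i).mulVec ψ) = ∑ i, (Q i) *ᵥ ψ from sum_mulVec' _ _ _]
    rw [dot_sum, Complex.re_sum]
    rw [← Fin.sum_univ_eq_sum_range (fun j => (star (p j) ⬝ᵥ (p j)).re) m]
    apply Finset.sum_congr rfl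
    intro i _
    simp only [hpdef, dif_pos i.isLt, Fin.eta]
    rw [hproj]
  have hε0 : 0 ≤ ε := by
    rw [hε]; exact Finset.sum_nonneg fun j _ => dot_self_nonneg _
  -- r
  set t : ℂ := star ψ ⬝ᵥ (x m) with htdef
  set r : ℝ := 1 - t.re with hrdef
  have hr : r = ∑ j ∈ Finset.range m, (star (p j) ⬝ᵥ (q j)).re := by
    have h := congrArg (fun w => (star ψ ⬝ᵥ w).re) (C2 m le_rfl)
    simp only [dotProduct_sub, dot_sum, Complex.re_sum, Complex.sub_re, hψ,
      Complex.one_re] at h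
    rw [hrdef, htdef, h]
    apply Finset.sum_congr rfl
    intro j hj
    have hjm : j < m := Finset.mem_range.mp hj
    simp only [hpdef, hqdef, dif_pos hjm]
    rw [hproj]
  -- r ≥ S/2 via normSq bound
  have hcs2 : Complex.normSq t ≤ (star (x m) ⬝ᵥ (x m)).re := by
    have h := cs_normSq ψ (x m)
    rw [hψ] at h
    simpa using h
  have hS2r : S ≤ 2 * r := by
    have hnt : Complex.normSq t = t.re ^ 2 + t.im ^ 2 := by
      simp [Complex.normSq_apply]; ring
    nlinarith [sq_nonneg (1 - t.re), sq_nonneg t.im]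
  have hr0 : 0 ≤ r := by linarith
  -- Cauchy-Schwarz sum bound : r^2 ≤ ε * S
  have hrs : r ≤ ∑ j ∈ Finset.range m,
      Real.sqrt ((star (p j) ⬝ᵥ (p j)).re) * Real.sqrt ((star (q j) ⬝ᵥ (q j)).re) := by
    rw [hr]
    exact Finset.sum_le_sum fun j _ => cs_re _ _
  have hr2 : r ^ 2 ≤ ε * S := by
    have h1 := Finset.sum_mul_sq_le_sq_mul_sq (Finset.range m)
      (fun j => Real.sqrt ((star (p j) ⬝ᵥ (p j)).re))
      (fun j => Real.sqrt ((star (q j) ⬝ᵥ (q j)).re))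
    have h2 : ∀ j, Real.sqrt ((star (p j) ⬝ᵥ (p j)).re) ^ 2 = (star (p j) ⬝ᵥ (p j)).re :=
      fun j => Real.sq_sqrt (dot_self_nonneg _)
    have h3 : ∀ j, Real.sqrt ((star (q j) ⬝ᵥ (q j)).re) ^ 2 = (star (q j) ⬝ᵥ (q j)).re :=
      fun j => Real.sq_sqrt (dot_self_nonneg _)
    simp only [h2, h3] at h1
    calc r ^ 2 ≤ (∑ j ∈ Finset.range m,
        Real.sqrt ((star (p j) ⬝ᵥ (p j)).re) * Real.sqrt ((star (q j) ⬝ᵥ (q j)).re)) ^ 2 := by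
          apply pow_le_pow_left₀ hr0 hrs
      _ ≤ (∑ j ∈ Finset.range m, (star (p j) ⬝ᵥ (p j)).re) *
            (∑ j ∈ Finset.range m, (star (q j) ⬝ᵥ (q j)).re) := h1
      _ = ε * S := by rw [hε, hSdef]
  -- conclude : S ≤ 4 ε
  have hfin : S ≤ 4 * ε := by
    rcases eq_or_lt_of_le hS0 with h0 | h0
    · linarith
    · have hSS : S * S ≤ (2 * r) * (2 * r) := by nlinarith
      have : S * S ≤ 4 * ε * S := by nlinarith
      exact le_of_mul_le_mul_right (by linarith) h0
  -- final rewriting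
  have hφ : (dlOp Q).mulVec ψ = x m := by rw [dlOp_eq_pf]
  rw [hφ]
  linarith

end
end

section
/- Let ρ_AB be a density operator on a bipartite Hilbert space H_A ⊗ H_B with H_A ≅ H_B, and let the SWAP test be the measurement accepting with probability Tr(Π_sym ρ_AB) where Π_sym = (I + SWAP)/2 is the projector-shifted symmetrizer (more precisely, acceptance probability equals ½(1 + Tr(SWAP·ρ_AB))). Then the acceptance probability is at most ½(1 + F(ρ_A, ρ_B)), where ρ_A, ρ_B are the reduced states and F(σ₁,σ₂) = ‖√σ₁ √σ₂‖₁ is the fidelity. -/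
open Matrix Complex
open scoped ComplexOrder

set_option linter.unusedSectionVars false
set_option maxHeartbeats 1000000
noncomputable section


open Classical in
/-- The positive square root of a positive semidefinite matrix (0 if not PSD). -/
def psdSqrt {m : Type*} [Fintype m] [DecidableEq m] (M : Matrix m m ℂ) : Matrix m m ℂ :=
  if h : M.PosSemidef then
    h.1.eigenvectorUnitary.1 * diagonal ((↑) ∘ (√·) ∘ h.1.eigenvalues) *
      (star h.1.eigenvectorUnitary : Matrix m m ℂ)
  else 0

/-- Trace norm ‖M‖₁ = Tr√(M†M). -/
def traceNorm {m : Type*} [Fintype m] [DecidableEq m] (M : Matrix m m ℂ) : ℝ :=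
  ((psdSqrt (Mᴴ * M)).trace).re

/-- Fidelity F(σ₁,σ₂) = ‖√σ₁ √σ₂‖₁. -/
def fid {m : Type*} [Fintype m] [DecidableEq m] (a b : Matrix m m ℂ) : ℝ :=
  traceNorm (psdSqrt a * psdSqrt b)

/-- SWAP unitary on a bipartite system. -/
def swapMat (d : ℕ) : Matrix (Fin d × Fin d) (Fin d × Fin d) ℂ :=
  Matrix.of fun p q => if p.1 = q.2 ∧ p.2 = q.1 then 1 else 0

/-- Reduced state on the first factor, ρ_A = Tr_B ρ. -/
def redA {d : ℕ} (ρ : Matrix (Fin d × Fin d) (Fin d × Fin d) ℂ) : Matrix (Fin d) (Fin d) ℂ :=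
  Matrix.of fun i k => ∑ j, ρ (i, j) (k, j)

/-- Reduced state on the second factor, ρ_B = Tr_A ρ. -/
def redB {d : ℕ} (ρ : Matrix (Fin d × Fin d) (Fin d × Fin d) ℂ) : Matrix (Fin d) (Fin d) ℂ :=
  Matrix.of fun j l => ∑ i, ρ (i, j) (i, l)

namespace SwapAux

variable {m : Type*} [Fintype m] [DecidableEq m]

/-- squared euclidean norm of a complex vector -/
def nsq (v : m → ℂ) : ℝ := (star v ⬝ᵥ v).re

lemma inner_equiv_symm' (x y : m → ℂ) :
    inner ℂ ((WithLp.equiv 2 (m → ℂ)).symm x) ((WithLp.equiv 2 (m → ℂ)).symm y)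
      = star x ⬝ᵥ y := by
  rw [dotProduct_comm]; rfl

lemma nsq_eq_norm_sq (v : m → ℂ) :
    nsq v = ‖(WithLp.equiv 2 (m → ℂ)).symm v‖ ^ 2 := by
  have := inner_equiv_symm' v v
  have h2 : (inner ℂ ((WithLp.equiv 2 (m → ℂ)).symm v) ((WithLp.equiv 2 (m → ℂ)).symm v) : ℂ)
      = (‖(WithLp.equiv 2 (m → ℂ)).symm v‖ : ℂ) ^ 2 := inner_self_eq_norm_sq_to_K _
  rw [nsq, ← this, h2]
  norm_cast

lemma nsq_nonneg (v : m → ℂ) : 0 ≤ nsq v := by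
  rw [nsq_eq_norm_sq]; positivity

lemma sqrt_nsq (v : m → ℂ) :
    Real.sqrt (nsq v) = ‖(WithLp.equiv 2 (m → ℂ)).symm v‖ := by
  rw [nsq_eq_norm_sq, Real.sqrt_sq (norm_nonneg _)]

/-- Cauchy–Schwarz for the complex dot product -/
lemma cs (u v : m → ℂ) :
    ‖star u ⬝ᵥ v‖ ≤ Real.sqrt (nsq u) * Real.sqrt (nsq v) := by
  rw [sqrt_nsq, sqrt_nsq, ← inner_equiv_symm']
  exact norm_inner_le_norm _ _

lemma re_le_cs (u v : m → ℂ) :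
    (star u ⬝ᵥ v).re ≤ Real.sqrt (nsq u) * Real.sqrt (nsq v) :=
  (Complex.re_le_norm _).trans (cs u v)


/-- adjoint pairing -/
lemma pairing (M : Matrix m m ℂ) (u v : m → ℂ) :
    star u ⬝ᵥ (M *ᵥ v) = star (Mᴴ *ᵥ u) ⬝ᵥ v := by
  rw [star_mulVec, conjTranspose_conjTranspose, ← dotProduct_mulVec]

lemma re_star_dot_comm (x y : m → ℂ) : (star x ⬝ᵥ y).re = (star y ⬝ᵥ x).re := by
  simp only [dotProduct, Complex.re_sum]
  refine Finset.sum_congr rfl fun i _ => ?_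
  simp only [Pi.star_apply, Complex.mul_re, Complex.star_def, Complex.conj_re,
    Complex.conj_im]
  ring

lemma nsq_mulVec (M : Matrix m m ℂ) (v : m → ℂ) :
    nsq (M *ᵥ v) = (star v ⬝ᵥ ((Mᴴ * M) *ᵥ v)).re := by
  rw [nsq, pairing, ← mulVec_mulVec, re_star_dot_comm, pairing, conjTranspose_conjTranspose]

/-- contraction property: `‖M v‖ ≤ ‖v‖` for all `v` (squared form) -/
def Ctr (M : Matrix m m ℂ) : Prop := ∀ v, nsq (M *ᵥ v) ≤ nsq v

lemma Ctr.mul {M N : Matrix m m ℂ} (hM : Ctr M) (hN : Ctr N) : Ctr (M * N) := by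
  intro v
  rw [← mulVec_mulVec]
  exact (hM _).trans (hN _)

lemma nsq_le_of_sqrt {a b : ℝ} (hb : 0 ≤ b) (h : a ≤ Real.sqrt a * Real.sqrt b) : a ≤ b := by
  rcases le_or_gt a 0 with h0 | h0
  · linarith
  · have h1 : Real.sqrt a * Real.sqrt a ≤ Real.sqrt a * Real.sqrt b := by
      rw [Real.mul_self_sqrt h0.le]; exact h
    have h2 : Real.sqrt a ≤ Real.sqrt b :=
      le_of_mul_le_mul_left h1 (Real.sqrt_pos.mpr h0)
    calc a = Real.sqrt a * Real.sqrt a := (Real.mul_self_sqrt h0.le).symm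
    _ ≤ Real.sqrt b * Real.sqrt b := mul_le_mul h2 h2 (Real.sqrt_nonneg _) (Real.sqrt_nonneg _)
    _ = b := Real.mul_self_sqrt hb

lemma Ctr.conjTranspose {M : Matrix m m ℂ} (hM : Ctr M) : Ctr Mᴴ := by
  intro v
  apply nsq_le_of_sqrt (nsq_nonneg v)
  have h1 : nsq (Mᴴ *ᵥ v) = (star v ⬝ᵥ (M *ᵥ (Mᴴ *ᵥ v))).re := by
    rw [pairing, nsq]
  rw [h1]
  have step1 : (star v ⬝ᵥ (M *ᵥ (Mᴴ *ᵥ v))).re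
      ≤ Real.sqrt (nsq v) * Real.sqrt (nsq (M *ᵥ (Mᴴ *ᵥ v))) := re_le_cs _ _
  have step2 : Real.sqrt (nsq (M *ᵥ (Mᴴ *ᵥ v))) ≤ Real.sqrt (nsq (Mᴴ *ᵥ v)) :=
    Real.sqrt_le_sqrt (hM _)
  calc (star v ⬝ᵥ (M *ᵥ (Mᴴ *ᵥ v))).re
      ≤ Real.sqrt (nsq v) * Real.sqrt (nsq (Mᴴ *ᵥ v)) := by
        refine step1.trans ?_
        exact mul_le_mul_of_nonneg_left step2 (Real.sqrt_nonneg _)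
    _ = Real.sqrt (star v ⬝ᵥ M *ᵥ Mᴴ *ᵥ v).re * Real.sqrt (nsq v) := by
        rw [mul_comm, h1]

/-- projections: `nsq (P v) = re ⟨v, P v⟩` -/
lemma proj_dot {P : Matrix m m ℂ} (h1 : Pᴴ = P) (h2 : P * P = P) (v : m → ℂ) :
    nsq (P *ᵥ v) = (star v ⬝ᵥ (P *ᵥ v)).re := by
  rw [nsq_mulVec, h1, h2]

lemma proj_ctr_dot {P : Matrix m m ℂ} (h1 : Pᴴ = P) (h2 : P * P = P) (v : m → ℂ) :
    (star v ⬝ᵥ (P *ᵥ v)).re ≤ nsq v := by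
  have hQ1 : (1 - P)ᴴ = 1 - P := by simp [h1]
  have hQ2 : (1 - P) * (1 - P) = 1 - P := by
    have e : (1 - P) * (1 - P) = 1 - P - P + P * P := by noncomm_ring
    rw [e, h2]; abel
  have := nsq_nonneg ((1 - P) *ᵥ v)
  rw [proj_dot hQ1 hQ2 v, sub_mulVec, one_mulVec, dotProduct_sub, Complex.sub_re] at this
  have : (star v ⬝ᵥ (P *ᵥ v)).re ≤ (star v ⬝ᵥ v).re := by linarith
  exact this


lemma sum_mulVec {Z : Type*} [Fintype Z] (X : Z → Matrix m m ℂ) (v : m → ℂ) :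
    (∑ z, X z) *ᵥ v = ∑ z, (X z *ᵥ v) := by
  funext i
  simp only [mulVec, dotProduct, Matrix.sum_apply, Finset.sum_apply, Finset.sum_mul]
  rw [Finset.sum_comm]

lemma dotProduct_sum' {Z : Type*} [Fintype Z] (u : m → ℂ) (f : Z → (m → ℂ)) :
    u ⬝ᵥ (∑ z, f z) = ∑ z, u ⬝ᵥ f z := by
  simp [dotProduct, Finset.mul_sum]
  rw [Finset.sum_comm]

lemma sum_sqrt_mul_sqrt {Z : Type*} [Fintype Z] (f g : Z → ℝ)
    (hf : ∀ z, 0 ≤ f z) (hg : ∀ z, 0 ≤ g z) :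
    ∑ z, Real.sqrt (f z) * Real.sqrt (g z)
      ≤ Real.sqrt (∑ z, f z) * Real.sqrt (∑ z, g z) := by
  have hcs := Finset.sum_mul_sq_le_sq_mul_sq Finset.univ
    (fun z => Real.sqrt (f z)) (fun z => Real.sqrt (g z))
  have h1 : ∀ z : Z, Real.sqrt (f z) ^ 2 = f z := fun z => Real.sq_sqrt (hf z)
  have h2 : ∀ z : Z, Real.sqrt (g z) ^ 2 = g z := fun z => Real.sq_sqrt (hg z)
  simp only [h1, h2] at hcs
  have hL : 0 ≤ ∑ z, Real.sqrt (f z) * Real.sqrt (g z) :=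
    Finset.sum_nonneg fun z _ => mul_nonneg (Real.sqrt_nonneg _) (Real.sqrt_nonneg _)
  have := Real.sqrt_le_sqrt hcs
  rwa [Real.sqrt_sq hL, Real.sqrt_mul (Finset.sum_nonneg fun z _ => hf z)] at this

/-- operator Cauchy–Schwarz: if `∑ X Xᴴ ≤ 1` and `∑ Yᴴ Y ≤ 1` (weakly), then
`∑ X z * Y z` is a contraction. -/
lemma ctr_sum {Z : Type*} [Fintype Z] (X Y : Z → Matrix m m ℂ)
    (hX : ∀ v, (star v ⬝ᵥ ((∑ z, X z * (X z)ᴴ) *ᵥ v)).re ≤ nsq v)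
    (hY : ∀ v, (star v ⬝ᵥ ((∑ z, (Y z)ᴴ * Y z) *ᵥ v)).re ≤ nsq v) :
    Ctr (∑ z, X z * Y z) := by
  intro v
  set w := (∑ z, X z * Y z) *ᵥ v with hw
  apply nsq_le_of_sqrt (nsq_nonneg v)
  have key : nsq w ≤ Real.sqrt (nsq w) * Real.sqrt (nsq v) := by
    have e1 : nsq w = ∑ z, (star ((X z)ᴴ *ᵥ w) ⬝ᵥ (Y z *ᵥ v)).re := by
      rw [nsq, hw, sum_mulVec, dotProduct_sum', Complex.re_sum]
      refine Finset.sum_congr rfl fun z _ => ?_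
      rw [← mulVec_mulVec, pairing]
    have e2 : ∀ z, (star ((X z)ᴴ *ᵥ w) ⬝ᵥ (Y z *ᵥ v)).re
        ≤ Real.sqrt (nsq ((X z)ᴴ *ᵥ w)) * Real.sqrt (nsq (Y z *ᵥ v)) :=
      fun z => re_le_cs _ _
    have e3 : ∑ z, Real.sqrt (nsq ((X z)ᴴ *ᵥ w)) * Real.sqrt (nsq (Y z *ᵥ v))
        ≤ Real.sqrt (∑ z, nsq ((X z)ᴴ *ᵥ w)) * Real.sqrt (∑ z, nsq (Y z *ᵥ v)) :=
      sum_sqrt_mul_sqrt _ _ (fun z => nsq_nonneg _) (fun z => nsq_nonneg _)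
    have e4 : ∑ z, nsq ((X z)ᴴ *ᵥ w) ≤ nsq w := by
      have : ∀ z, nsq ((X z)ᴴ *ᵥ w) = (star w ⬝ᵥ ((X z * (X z)ᴴ) *ᵥ w)).re := by
        intro z
        rw [nsq_mulVec, conjTranspose_conjTranspose]
      simp only [this]
      calc ∑ z, (star w ⬝ᵥ ((X z * (X z)ᴴ) *ᵥ w)).re
          = (star w ⬝ᵥ ((∑ z, X z * (X z)ᴴ) *ᵥ w)).re := by
            rw [sum_mulVec, dotProduct_sum', Complex.re_sum]
        _ ≤ nsq w := hX w
    have e5 : ∑ z, nsq (Y z *ᵥ v) ≤ nsq v := by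
      have : ∀ z, nsq (Y z *ᵥ v) = (star v ⬝ᵥ (((Y z)ᴴ * Y z) *ᵥ v)).re :=
        fun z => nsq_mulVec _ _
      simp only [this]
      calc ∑ z, (star v ⬝ᵥ (((Y z)ᴴ * Y z) *ᵥ v)).re
          = (star v ⬝ᵥ ((∑ z, (Y z)ᴴ * Y z) *ᵥ v)).re := by
            rw [sum_mulVec, dotProduct_sum', Complex.re_sum]
        _ ≤ nsq v := hY v
    calc nsq w = ∑ z, (star ((X z)ᴴ *ᵥ w) ⬝ᵥ (Y z *ᵥ v)).re := e1
      _ ≤ ∑ z, Real.sqrt (nsq ((X z)ᴴ *ᵥ w)) * Real.sqrt (nsq (Y z *ᵥ v)) :=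
          Finset.sum_le_sum fun z _ => e2 z
      _ ≤ Real.sqrt (∑ z, nsq ((X z)ᴴ *ᵥ w)) * Real.sqrt (∑ z, nsq (Y z *ᵥ v)) := e3
      _ ≤ Real.sqrt (nsq w) * Real.sqrt (nsq v) :=
          mul_le_mul (Real.sqrt_le_sqrt e4) (Real.sqrt_le_sqrt e5)
            (Real.sqrt_nonneg _) (Real.sqrt_nonneg _)
  exact key


section pinv

open Classical in
/-- pseudo-inverse of a PSD matrix -/
noncomputable def pinv (M : Matrix m m ℂ) : Matrix m m ℂ :=
  if h : M.PosSemidef then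
    (IsHermitian.eigenvectorUnitary h.1 : Matrix m m ℂ) *
      diagonal (RCLike.ofReal ∘ fun i =>
        (if h.1.eigenvalues i = 0 then 0 else (h.1.eigenvalues i)⁻¹ : ℝ)) *
      (star (IsHermitian.eigenvectorUnitary h.1) : Matrix m m ℂ)
  else 0

lemma sandwich_mul {U : Matrix m m ℂ} (hU : (star U) * U = 1) (f g : m → ℂ) :
    (U * diagonal f * star U) * (U * diagonal g * star U)
      = U * diagonal (fun i => f i * g i) * star U := by
  have : (U * diagonal f * star U) * (U * diagonal g * star U)
      = U * (diagonal f * ((star U) * U) * diagonal g) * star U := by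
    simp only [mul_assoc]
  rw [this, hU, mul_one, diagonal_mul_diagonal]

variable {A : Matrix m m ℂ}

lemma spectral' (h : A.IsHermitian) :
    A = (h.eigenvectorUnitary : Matrix m m ℂ) * diagonal (RCLike.ofReal ∘ h.eigenvalues) *
      (star h.eigenvectorUnitary : Matrix m m ℂ) := by
  exact h.spectral_theorem

lemma pinv_eq (h : A.PosSemidef) :
    pinv A = (IsHermitian.eigenvectorUnitary h.1 : Matrix m m ℂ) *
      diagonal (RCLike.ofReal ∘ fun i =>
        (if h.1.eigenvalues i = 0 then 0 else (h.1.eigenvalues i)⁻¹ : ℝ)) *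
      (star (IsHermitian.eigenvectorUnitary h.1) : Matrix m m ℂ) := by
  rw [pinv, dif_pos h]

lemma pinv_conjTranspose (h : A.PosSemidef) : (pinv A)ᴴ = pinv A := by
  rw [pinv_eq h, conjTranspose_mul, conjTranspose_mul, diagonal_conjTranspose]
  have hst : star (RCLike.ofReal ∘ fun i =>
      (if h.1.eigenvalues i = 0 then 0 else (h.1.eigenvalues i)⁻¹ : ℝ))
      = (RCLike.ofReal ∘ fun i =>
      (if h.1.eigenvalues i = 0 then 0 else (h.1.eigenvalues i)⁻¹ : ℝ) : m → ℂ) := by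
    funext i
    simp [Function.comp]
  rw [hst]
  simp only [star_eq_conjTranspose, conjTranspose_conjTranspose, mul_assoc]

lemma mul_pinv_eq (h : A.PosSemidef) :
    A * pinv A = (IsHermitian.eigenvectorUnitary h.1 : Matrix m m ℂ) *
      diagonal (fun i => (if h.1.eigenvalues i = 0 then (0 : ℂ) else 1)) *
      (star (IsHermitian.eigenvectorUnitary h.1) : Matrix m m ℂ) := by
  have hfun : (fun i => ((RCLike.ofReal ∘ h.1.eigenvalues) i : ℂ) *
      (RCLike.ofReal ∘ fun i =>
        (if h.1.eigenvalues i = 0 then 0 else (h.1.eigenvalues i)⁻¹ : ℝ)) i)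
      = fun i => (if h.1.eigenvalues i = 0 then (0 : ℂ) else 1) := by
    funext i
    by_cases hz : h.1.eigenvalues i = 0 <;>
      simp [hz, Function.comp, ← RCLike.ofReal_mul, mul_inv_cancel₀]
  calc A * pinv A
      = ((IsHermitian.eigenvectorUnitary h.1 : Matrix m m ℂ) *
          diagonal (RCLike.ofReal ∘ h.1.eigenvalues) *
          (star (IsHermitian.eigenvectorUnitary h.1) : Matrix m m ℂ)) *
        ((IsHermitian.eigenvectorUnitary h.1 : Matrix m m ℂ) *
          diagonal (RCLike.ofReal ∘ fun i =>
            (if h.1.eigenvalues i = 0 then 0 else (h.1.eigenvalues i)⁻¹ : ℝ)) *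
          (star (IsHermitian.eigenvectorUnitary h.1) : Matrix m m ℂ)) := by
        rw [← spectral' h.1, ← pinv_eq h]
    _ = _ := by
        rw [sandwich_mul (by simp [SetLike.coe_mem]), hfun]

lemma pinv_mul_eq (h : A.PosSemidef) :
    pinv A * A = (IsHermitian.eigenvectorUnitary h.1 : Matrix m m ℂ) *
      diagonal (fun i => (if h.1.eigenvalues i = 0 then (0 : ℂ) else 1)) *
      (star (IsHermitian.eigenvectorUnitary h.1) : Matrix m m ℂ) := by
  have hfun : (fun i => ((RCLike.ofReal ∘ fun i =>
        (if h.1.eigenvalues i = 0 then 0 else (h.1.eigenvalues i)⁻¹ : ℝ)) i : ℂ) *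
      (RCLike.ofReal ∘ h.1.eigenvalues) i)
      = fun i => (if h.1.eigenvalues i = 0 then (0 : ℂ) else 1) := by
    funext i
    by_cases hz : h.1.eigenvalues i = 0 <;>
      simp [hz, Function.comp, ← RCLike.ofReal_mul, inv_mul_cancel₀]
  calc pinv A * A
      = ((IsHermitian.eigenvectorUnitary h.1 : Matrix m m ℂ) *
          diagonal (RCLike.ofReal ∘ fun i =>
            (if h.1.eigenvalues i = 0 then 0 else (h.1.eigenvalues i)⁻¹ : ℝ)) *
          (star (IsHermitian.eigenvectorUnitary h.1) : Matrix m m ℂ)) *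
        ((IsHermitian.eigenvectorUnitary h.1 : Matrix m m ℂ) *
          diagonal (RCLike.ofReal ∘ h.1.eigenvalues) *
          (star (IsHermitian.eigenvectorUnitary h.1) : Matrix m m ℂ)) := by
        rw [← spectral' h.1, ← pinv_eq h]
    _ = _ := by
        rw [sandwich_mul (by simp [SetLike.coe_mem]), hfun]

lemma pinv_comm (h : A.PosSemidef) : A * pinv A = pinv A * A := by
  rw [mul_pinv_eq h, pinv_mul_eq h]

lemma proj_herm (h : A.PosSemidef) : (A * pinv A)ᴴ = A * pinv A := by
  rw [conjTranspose_mul, pinv_conjTranspose h, h.1.eq, pinv_comm h]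

lemma proj_idem (h : A.PosSemidef) : (A * pinv A) * (A * pinv A) = A * pinv A := by
  have hfun : (fun i => (if h.1.eigenvalues i = 0 then (0 : ℂ) else 1) *
      (if h.1.eigenvalues i = 0 then (0 : ℂ) else 1))
      = fun i => (if h.1.eigenvalues i = 0 then (0 : ℂ) else 1) := by
    funext i
    by_cases hz : h.1.eigenvalues i = 0 <;> simp [hz]
  rw [mul_pinv_eq h, sandwich_mul (by simp [SetLike.coe_mem]), hfun]

lemma proj_mul_self (h : A.PosSemidef) : (A * pinv A) * A = A := by
  have hfun : (fun i => (if h.1.eigenvalues i = 0 then (0 : ℂ) else 1) *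
      (RCLike.ofReal ∘ h.1.eigenvalues) i)
      = RCLike.ofReal ∘ h.1.eigenvalues := by
    funext i
    by_cases hz : h.1.eigenvalues i = 0 <;> simp [hz, Function.comp]
  calc (A * pinv A) * A
      = ((IsHermitian.eigenvectorUnitary h.1 : Matrix m m ℂ) *
          diagonal (fun i => (if h.1.eigenvalues i = 0 then (0 : ℂ) else 1)) *
          (star (IsHermitian.eigenvectorUnitary h.1) : Matrix m m ℂ)) *
        ((IsHermitian.eigenvectorUnitary h.1 : Matrix m m ℂ) *
          diagonal (RCLike.ofReal ∘ h.1.eigenvalues) *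
          (star (IsHermitian.eigenvectorUnitary h.1) : Matrix m m ℂ)) := by
        rw [← spectral' h.1, ← mul_pinv_eq h]
    _ = A := by
        rw [sandwich_mul (by simp [SetLike.coe_mem]), hfun]
        exact h.1.spectral_theorem.symm

lemma mul_proj_self (h : A.PosSemidef) : A * (A * pinv A) = A := by
  have := congrArg conjTranspose (proj_mul_self h)
  rwa [conjTranspose_mul, proj_herm h, h.1.eq] at this

end pinv


section core

variable {M X B : Matrix m m ℂ}

lemma trace_eq_sum (M : Matrix m m ℂ) : M.trace = ∑ i, M i i := rfl

lemma trace_re_nonneg (h : M.PosSemidef) : 0 ≤ M.trace.re := by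
  rw [trace_eq_sum, Complex.re_sum]
  refine Finset.sum_nonneg fun i _ => ?_
  have := h.dotProduct_mulVec_nonneg (Pi.single i 1)
  have hent : star (Pi.single i 1) ⬝ᵥ (M *ᵥ Pi.single i 1) = M i i := by
    simp [mulVec_single, dotProduct, Pi.single_apply]
  rw [hent] at this
  exact (Complex.le_def.mp this).1

lemma eq_zero_of_trace_re (Y : Matrix m m ℂ) (h : ((Y * Yᴴ).trace).re ≤ 0) : Y = 0 := by
  have htr : ((Y * Yᴴ).trace).re = ∑ i, ∑ j, Complex.normSq (Y i j) := by
    rw [trace_eq_sum, Complex.re_sum]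
    refine Finset.sum_congr rfl fun i _ => ?_
    rw [mul_apply, Complex.re_sum]
    refine Finset.sum_congr rfl fun j _ => ?_
    simp [conjTranspose_apply, Complex.normSq, Complex.mul_re]
  rw [htr] at h
  ext i j
  have hnn : ∀ i ∈ Finset.univ (α := m), 0 ≤ ∑ j, Complex.normSq (Y i j) :=
    fun i _ => Finset.sum_nonneg fun j _ => Complex.normSq_nonneg _
  have h0 : ∑ i, ∑ j, Complex.normSq (Y i j) = 0 :=
    le_antisymm h (Finset.sum_nonneg hnn)
  have h1 := (Finset.sum_eq_zero_iff_of_nonneg hnn).mp h0 i (Finset.mem_univ i)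
  have h2 := (Finset.sum_eq_zero_iff_of_nonneg
    (fun j _ => Complex.normSq_nonneg (Y i j))).mp h1 j (Finset.mem_univ j)
  simpa [Complex.normSq_eq_zero] using h2

/-- if `X Xᴴ ≤ A²` then the range projection of `A` absorbs `X`. -/
lemma range_absorb {A : Matrix m m ℂ} (hA : A.PosSemidef)
    (hle : (A * A - X * Xᴴ).PosSemidef) : (A * pinv A) * X = X := by
  set Q : Matrix m m ℂ := 1 - A * pinv A with hQ
  have hQh : Qᴴ = Q := by
    rw [hQ, conjTranspose_sub, conjTranspose_one, proj_herm hA]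
  have hQA : Q * A = 0 := by
    rw [hQ, sub_mul, one_mul, proj_mul_self hA, sub_self]
  have hpsd : (Q * (A * A - X * Xᴴ) * Qᴴ).PosSemidef :=
    hle.mul_mul_conjTranspose_same Q
  have hexp : Q * (A * A - X * Xᴴ) * Qᴴ = - ((Q * X) * (Q * X)ᴴ) := by
    rw [hQh, conjTranspose_mul, hQh]
    have e : Q * (A * A - X * Xᴴ) * Q = (Q * A) * (A * Q) - Q * (X * (Xᴴ * Q)) := by
      noncomm_ring
    rw [e, hQA, zero_mul, zero_sub]
    congr 1
    noncomm_ring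
  rw [hexp] at hpsd
  have hQX : Q * X = 0 := by
    apply eq_zero_of_trace_re
    have := trace_re_nonneg hpsd
    rw [trace_neg] at this
    simpa using this
  have : (1 - A * pinv A) * X = 0 := hQX
  rw [sub_mul, one_mul, sub_eq_zero] at this
  exact this.symm

lemma absorb_right {B : Matrix m m ℂ} (hB : B.PosSemidef)
    (hle : (B * B - Xᴴ * X).PosSemidef) : X * (B * pinv B) = X := by
  have hle' : (B * B - Xᴴ * (Xᴴ)ᴴ).PosSemidef := by
    rwa [conjTranspose_conjTranspose]
  have := range_absorb hB (X := Xᴴ) hle'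
  have h2 := congrArg conjTranspose this
  rwa [conjTranspose_mul, conjTranspose_conjTranspose, proj_herm hB] at h2

lemma psdSqrt_psd {M : Matrix m m ℂ} (h : M.PosSemidef) : (psdSqrt M).PosSemidef := by
  rw [psdSqrt, dif_pos h]
  have hd : (diagonal ((↑) ∘ (√·) ∘ h.1.eigenvalues) : Matrix m m ℂ).PosSemidef :=
    posSemidef_diagonal_iff.mpr fun i => Complex.zero_le_real.mpr (Real.sqrt_nonneg _)
  convert hd.mul_mul_conjTranspose_same (h.1.eigenvectorUnitary : Matrix m m ℂ) using 1
  rw [star_eq_conjTranspose]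

lemma psdSqrt_mul_self {M : Matrix m m ℂ} (h : M.PosSemidef) : psdSqrt M * psdSqrt M = M := by
  rw [psdSqrt, dif_pos h]
  rw [sandwich_mul (by simp [SetLike.coe_mem])]
  have hfun : ∀ i, ((√(h.1.eigenvalues i) : ℝ) : ℂ) * ((√(h.1.eigenvalues i) : ℝ) : ℂ)
      = (h.1.eigenvalues i : ℂ) := fun i => by
    rw [← Complex.ofReal_mul, Real.mul_self_sqrt (h.eigenvalues_nonneg i)]
  simp only [Function.comp_apply, hfun]
  exact (spectral' h.1).symm

/-- the key trace-norm duality bound : `Re Tr (N W) ≤ ‖N‖₁` for a contraction `W`. -/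
lemma re_trace_le (N W : Matrix m m ℂ) (hW : Ctr W) :
    ((N * W).trace).re ≤ ((psdSqrt (Nᴴ * N)).trace).re := by
  have hNN : (Nᴴ * N).PosSemidef := posSemidef_conjTranspose_mul_self N
  set H := psdSqrt (Nᴴ * N) with hHdef
  have hHpsd : H.PosSemidef := psdSqrt_psd hNN
  have hHH : H * H = Nᴴ * N := psdSqrt_mul_self hNN
  set R := psdSqrt H with hRdef
  have hRpsd : R.PosSemidef := psdSqrt_psd hHpsd
  have hRR : R * R = H := psdSqrt_mul_self hHpsd
  obtain ⟨P, hPdef⟩ : ∃ P : Matrix m m ℂ, P = H * pinv H := ⟨_, rfl⟩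
  have hPh : Pᴴ = P := by rw [hPdef]; exact proj_herm hHpsd
  have hPP : P * P = P := by rw [hPdef]; exact proj_idem hHpsd
  have hHP : H * P = H := by rw [hPdef]; exact mul_proj_self hHpsd
  -- N is absorbed by the range projection of H
  have hNP : N * P = N := by
    have hzero : (N - N * P)ᴴ * (N - N * P) = 0 := by
      have e1 : (N - N * P)ᴴ * (N - N * P)
          = (1 - Pᴴ) * (Nᴴ * N) * (1 - P) := by
        rw [conjTranspose_sub, conjTranspose_mul]
        noncomm_ring
      have e2 : (1 - Pᴴ) * (Nᴴ * N) * (1 - P)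
          = (H * (1 - P))ᴴ * (H * (1 - P)) := by
        rw [conjTranspose_mul, conjTranspose_sub, conjTranspose_one, hPh,
          hHpsd.1.eq, ← hHH]
        noncomm_ring
      have e3 : H * (1 - P) = 0 := by
        rw [mul_sub, mul_one, hHP, sub_self]
      rw [e1, e2, e3]
      simp
    have := conjTranspose_mul_self_eq_zero.mp hzero
    rw [sub_eq_zero] at this
    exact this.symm
  obtain ⟨V, hVdef⟩ : ∃ V : Matrix m m ℂ, V = N * pinv H := ⟨_, rfl⟩
  have hVH : V * H = N := by
    calc V * H = N * (pinv H * H) := by rw [hVdef, mul_assoc]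
      _ = N * P := by rw [hPdef, pinv_comm hHpsd]
      _ = N := hNP
  have hVV : Vᴴ * V = P := by
    rw [hVdef, conjTranspose_mul, pinv_conjTranspose hHpsd]
    calc pinv H * Nᴴ * (N * pinv H) = pinv H * (Nᴴ * N) * pinv H := by
          noncomm_ring
      _ = (pinv H * H) * (H * pinv H) := by rw [← hHH]; noncomm_ring
      _ = P * P := by rw [hPdef, pinv_comm hHpsd]
      _ = P := hPP
  have hCtrV : Ctr V := by
    intro v
    rw [nsq_mulVec, hVV]
    exact proj_ctr_dot hPh hPP v
  have hCtrWV : Ctr (W * V) := hW.mul hCtrV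
  -- trace rearrangement
  have htr : (N * W).trace = (R * (W * V) * R).trace := by
    calc (N * W).trace = ((V * H) * W).trace := by rw [hVH]
      _ = ((H * W) * V).trace := by
            rw [mul_assoc, trace_mul_comm, mul_assoc]
      _ = (R * ((R * W) * V)).trace := by
            rw [← hRR]; noncomm_ring
      _ = (((R * W) * V) * R).trace := trace_mul_comm _ _
      _ = (R * (W * V) * R).trace := by noncomm_ring
  rw [htr]
  -- entrywise bound
  have hRh : ∀ a i, (starRingEnd ℂ) (R a i) = R i a := by
    intro a i
    have := congrFun (congrFun hRpsd.1.eq i) a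
    rw [conjTranspose_apply] at this
    exact this
  have hentry : ∀ i, (R * (W * V) * R) i i
      = star (fun a => R a i) ⬝ᵥ ((W * V) *ᵥ (fun a => R a i)) := by
    intro i
    simp only [mul_apply, dotProduct, mulVec, Pi.star_apply, Finset.sum_mul,
      Finset.mul_sum]
    rw [Finset.sum_comm]
    refine Finset.sum_congr rfl fun b _ => ?_
    refine Finset.sum_congr rfl fun a _ => ?_
    rw [RCLike.star_def, hRh]
    refine Finset.sum_congr rfl fun x _ => ?_
    ring
  have hdiag : ∀ i, ((H : Matrix m m ℂ) i i).re = nsq (fun a => R a i) := by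
    intro i
    rw [← hRR, mul_apply, nsq, dotProduct, Complex.re_sum, Complex.re_sum]
    refine Finset.sum_congr rfl fun a _ => ?_
    rw [Pi.star_apply, RCLike.star_def, hRh]
  have hbound : ∀ i, ((R * (W * V) * R) i i).re ≤ ((H : Matrix m m ℂ) i i).re := by
    intro i
    rw [hentry i, hdiag i]
    set c : m → ℂ := fun a => R a i with hc
    calc (star c ⬝ᵥ ((W * V) *ᵥ c)).re
        ≤ Real.sqrt (nsq c) * Real.sqrt (nsq ((W * V) *ᵥ c)) := re_le_cs _ _
      _ ≤ Real.sqrt (nsq c) * Real.sqrt (nsq c) := by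
          exact mul_le_mul_of_nonneg_left (Real.sqrt_le_sqrt (hCtrWV c))
            (Real.sqrt_nonneg _)
      _ = nsq c := Real.mul_self_sqrt (nsq_nonneg c)
  rw [trace_eq_sum, trace_eq_sum, Complex.re_sum, Complex.re_sum]
  exact Finset.sum_le_sum fun i _ => hbound i

end core


lemma posSemidef_sum {Z : Type*} (s : Finset Z) (f : Z → Matrix m m ℂ)
    (h : ∀ z ∈ s, (f z).PosSemidef) : (∑ z ∈ s, f z).PosSemidef :=
  Finset.sum_induction f (fun M => M.PosSemidef)
    (fun _ _ ha hb => ha.add hb) Matrix.PosSemidef.zero h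

end SwapAux

open SwapAux in
theorem swap_test_bound' {d : ℕ}
    (ρ : Matrix (Fin d × Fin d) (Fin d × Fin d) ℂ)
    (hρ : ρ.PosSemidef) :
    ((swapMat d * ρ).trace).re ≤ fid (redA ρ) (redB ρ) := by
  classical
  set S := psdSqrt ρ with hSdef
  have hSpsd : S.PosSemidef := psdSqrt_psd hρ
  have hρS : S * S = ρ := psdSqrt_mul_self hρ
  have hSh : ∀ p q, (starRingEnd ℂ) (S p q) = S q p := by
    intro p q
    have := congrFun (congrFun hSpsd.1.eq q) p
    rw [conjTranspose_apply] at this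
    exact this
  set T : (Fin d × Fin d) → Matrix (Fin d) (Fin d) ℂ :=
    fun z => Matrix.of fun i j => S z (i, j) with hT
  set G : (Fin d × Fin d) → Matrix (Fin d) (Fin d) ℂ :=
    fun z => Matrix.of fun i j => (starRingEnd ℂ) (S z (i, j)) with hG
  -- the three structural identities
  have hredA : redA ρ = ∑ z, G z * (G z)ᴴ := by
    ext i k
    rw [Matrix.sum_apply]
    show (∑ j, ρ (i, j) (k, j)) = _
    rw [← hρS]
    calc ∑ j, (S * S) (i, j) (k, j)
        = ∑ j, ∑ z, S (i, j) z * S z (k, j) := by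
          refine Finset.sum_congr rfl fun j _ => ?_
          rw [mul_apply]
      _ = ∑ z, ∑ j, S (i, j) z * S z (k, j) := Finset.sum_comm
      _ = ∑ z, (G z * (G z)ᴴ) i k := by
          refine Finset.sum_congr rfl fun z _ => ?_
          rw [mul_apply]
          refine Finset.sum_congr rfl fun j _ => ?_
          simp only [hG, conjTranspose_apply, Matrix.of_apply, RCLike.star_def,
            Complex.conj_conj]
          rw [hSh]
  have hredB : redB ρ = ∑ z, (T z)ᴴ * T z := by
    ext j l
    rw [Matrix.sum_apply]
    show (∑ i, ρ (i, j) (i, l)) = _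
    rw [← hρS]
    calc ∑ i, (S * S) (i, j) (i, l)
        = ∑ i, ∑ z, S (i, j) z * S z (i, l) := by
          refine Finset.sum_congr rfl fun i _ => ?_
          rw [mul_apply]
      _ = ∑ z, ∑ i, S (i, j) z * S z (i, l) := Finset.sum_comm
      _ = ∑ z, ((T z)ᴴ * T z) j l := by
          refine Finset.sum_congr rfl fun z _ => ?_
          rw [mul_apply]
          refine Finset.sum_congr rfl fun i _ => ?_
          simp only [hT, conjTranspose_apply, Matrix.of_apply, RCLike.star_def]
          rw [hSh]
  have hswap : (swapMat d * ρ).trace = ∑ z, (G z * T z).trace := by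
    have lhs : (swapMat d * ρ).trace = ∑ p : Fin d × Fin d, ρ (p.2, p.1) p := by
      rw [trace_eq_sum]
      refine Finset.sum_congr rfl fun p _ => ?_
      rw [mul_apply]
      rw [Finset.sum_eq_single ((p.2, p.1) : Fin d × Fin d)]
      · simp [swapMat]
      · intro q _ hq
        have hcond : ¬(p.1 = q.2 ∧ p.2 = q.1) := by
          rintro ⟨h1, h2⟩
          exact hq (Prod.ext h2.symm h1.symm)
        simp [swapMat, hcond]
      · intro h
        exact absurd (Finset.mem_univ _) h
    have rhs : ∀ z, (G z * T z).trace = ∑ j, ∑ i, S (j, i) z * S z (i, j) := by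
      intro z
      rw [trace_eq_sum]
      refine Finset.sum_congr rfl fun j _ => ?_
      rw [mul_apply]
      refine Finset.sum_congr rfl fun i _ => ?_
      simp only [hG, hT, Matrix.of_apply]
      rw [hSh]
    simp only [rhs, lhs]
    calc ∑ p : Fin d × Fin d, ρ (p.2, p.1) p
        = ∑ i, ∑ j, ρ ((j : Fin d), (i : Fin d)) (i, j) := Fintype.sum_prod_type _
      _ = ∑ j, ∑ i, ρ ((j : Fin d), (i : Fin d)) (i, j) := Finset.sum_comm
      _ = ∑ j, ∑ i, ∑ z, S (j, i) z * S z (i, j) := by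
          refine Finset.sum_congr rfl fun j _ => Finset.sum_congr rfl fun i _ => ?_
          rw [← hρS, mul_apply]
      _ = ∑ j, ∑ z, ∑ i, S (j, i) z * S z (i, j) :=
          Finset.sum_congr rfl fun j _ => Finset.sum_comm
      _ = ∑ z, ∑ j, ∑ i, S (j, i) z * S z (i, j) := Finset.sum_comm
  -- positivity of the reduced states
  have hApsd : (redA ρ).PosSemidef := by
    rw [hredA]
    exact posSemidef_sum _ _ fun z _ => posSemidef_self_mul_conjTranspose _
  have hBpsd : (redB ρ).PosSemidef := by
    rw [hredB]
    exact posSemidef_sum _ _ fun z _ => posSemidef_conjTranspose_mul_self _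
  set A := psdSqrt (redA ρ) with hAdef
  set B := psdSqrt (redB ρ) with hBdef
  have hApsd' : A.PosSemidef := psdSqrt_psd hApsd
  have hBpsd' : B.PosSemidef := psdSqrt_psd hBpsd
  have hAA : A * A = redA ρ := psdSqrt_mul_self hApsd
  have hBB : B * B = redB ρ := psdSqrt_mul_self hBpsd
  -- G z is absorbed on the left by A, T z on the right by B
  have hdiffA : ∀ z, (A * A - G z * (G z)ᴴ).PosSemidef := by
    intro z
    rw [hAA, hredA, ← Finset.add_sum_erase _ _ (Finset.mem_univ z), add_sub_cancel_left]
    exact posSemidef_sum _ _ fun w _ => posSemidef_self_mul_conjTranspose _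
  have hdiffB : ∀ z, (B * B - (T z)ᴴ * T z).PosSemidef := by
    intro z
    rw [hBB, hredB, ← Finset.add_sum_erase _ _ (Finset.mem_univ z), add_sub_cancel_left]
    exact posSemidef_sum _ _ fun w _ => posSemidef_conjTranspose_mul_self _
  set X : (Fin d × Fin d) → Matrix (Fin d) (Fin d) ℂ := fun z => pinv A * G z with hX
  set Y : (Fin d × Fin d) → Matrix (Fin d) (Fin d) ℂ := fun z => T z * pinv B with hY
  have hAX : ∀ z, A * X z = G z := by
    intro z
    rw [hX, ← mul_assoc]
    exact range_absorb hApsd' (hdiffA z)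
  have hYB : ∀ z, Y z * B = T z := by
    intro z
    rw [hY, mul_assoc, ← pinv_comm hBpsd']
    exact absorb_right hBpsd' (hdiffB z)
  have hXX : ∑ z, X z * (X z)ᴴ = A * pinv A := by
    have : ∀ z, X z * (X z)ᴴ = pinv A * (G z * (G z)ᴴ) * pinv A := by
      intro z
      rw [hX, conjTranspose_mul, pinv_conjTranspose hApsd']
      noncomm_ring
    simp only [this]
    rw [← Finset.sum_mul, ← Finset.mul_sum, ← hredA, ← hAA]
    calc pinv A * (A * A) * pinv A = (pinv A * A) * (A * pinv A) := by noncomm_ring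
      _ = (A * pinv A) * (A * pinv A) := by rw [← pinv_comm hApsd']
      _ = A * pinv A := proj_idem hApsd'
  have hYY : ∑ z, (Y z)ᴴ * Y z = B * pinv B := by
    have : ∀ z, (Y z)ᴴ * Y z = pinv B * ((T z)ᴴ * T z) * pinv B := by
      intro z
      rw [hY, conjTranspose_mul, pinv_conjTranspose hBpsd']
      noncomm_ring
    simp only [this]
    rw [← Finset.sum_mul, ← Finset.mul_sum, ← hredB, ← hBB]
    calc pinv B * (B * B) * pinv B = (pinv B * B) * (B * pinv B) := by noncomm_ring
      _ = (B * pinv B) * (B * pinv B) := by rw [← pinv_comm hBpsd']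
      _ = B * pinv B := proj_idem hBpsd'
  have hCtrM : Ctr (∑ z, X z * Y z) := by
    apply ctr_sum
    · intro v
      rw [hXX]
      exact proj_ctr_dot (proj_herm hApsd') (proj_idem hApsd') v
    · intro v
      rw [hYY]
      exact proj_ctr_dot (proj_herm hBpsd') (proj_idem hBpsd') v
  obtain ⟨M, hM⟩ : ∃ M, M = ∑ z, X z * Y z := ⟨_, rfl⟩
  have hCtrM' : Ctr M := hM ▸ hCtrM
  -- trace rearrangement
  have htr1 : ∑ z, (G z * T z).trace = (A * M * B).trace := by
    have : ∀ z, G z * T z = A * (X z * Y z) * B := by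
      intro z
      rw [← hAX z, ← hYB z]
      noncomm_ring
    simp only [this]
    rw [← Matrix.trace_sum]
    congr 1
    rw [hM, Finset.mul_sum, Finset.sum_mul]
  set N := A * B with hN
  have hNh : Nᴴ = B * A := by
    rw [hN, conjTranspose_mul, hApsd'.1.eq, hBpsd'.1.eq]
  have htr2 : (A * M * B).trace = (Nᴴ * M).trace := by
    rw [hNh]
    calc (A * M * B).trace = ((A * M) * B).trace := by rw [mul_assoc]
      _ = (B * (A * M)).trace := trace_mul_comm _ _
      _ = ((B * A) * M).trace := by rw [mul_assoc]
  have htr3 : ((Nᴴ * M).trace).re = ((N * Mᴴ).trace).re := by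
    have e : (Nᴴ * M)ᴴ = Mᴴ * N := by
      rw [conjTranspose_mul, conjTranspose_conjTranspose]
    have e2 : (Mᴴ * N).trace = star ((Nᴴ * M).trace) := by
      rw [← e, trace_conjTranspose]
    have e3 : (N * Mᴴ).trace = (Mᴴ * N).trace := trace_mul_comm _ _
    rw [e3, e2, Complex.star_def, Complex.conj_re]
  have hfinal : ((N * Mᴴ).trace).re ≤ ((psdSqrt (Nᴴ * N)).trace).re :=
    re_trace_le N Mᴴ hCtrM'.conjTranspose
  calc ((swapMat d * ρ).trace).re
      = (∑ z, (G z * T z).trace).re := by rw [hswap]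
    _ = ((A * M * B).trace).re := by rw [htr1]
    _ = ((Nᴴ * M).trace).re := by rw [htr2]
    _ = ((N * Mᴴ).trace).re := htr3
    _ ≤ ((psdSqrt (Nᴴ * N)).trace).re := hfinal
    _ = fid (redA ρ) (redB ρ) := rfl

/-- SWAP test bound: the acceptance probability ½(1+Tr(SWAP·ρ)) is at most ½(1+F(ρ_A,ρ_B)). -/
theorem swap_test_bound {d : ℕ}
    (ρ : Matrix (Fin d × Fin d) (Fin d × Fin d) ℂ)
    (hρ : ρ.PosSemidef) (htr : ρ.trace = 1) :
    (1 / 2 : ℝ) * (1 + ((swapMat d * ρ).trace).re)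
      ≤ (1 / 2) * (1 + fid (redA ρ) (redB ρ)) := by
  have h := swap_test_bound' ρ hρ
  linarith

end
end
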